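/- For every integer n ≥ 2, ∑_{r=2}^{n} (n/(n-1))^n · (r/n) · (n_[r]/n^r) · (D_r/r!) = 1; that is, the law of the core size of the screaming-toes mapping, P(Ñ_n = r) = (n/(n-1))^n · (r/n) · (n_[r]/n^r) · (D_r/r!) for r = 2,…,n, is a probability distribution. -/

import Mathlib

open Finset

/-- Derangement number `D k = k! * ∑_{j=0}^k (-1)^j/j!`, as a real number. -/
noncomputable def derNum (k : ℕ) : ℝ :=
  (k.factorial : ℝ) * ∑ j ∈ Finset.range (k + 1), (-1 : ℝ) ^ j / (j.factorial : ℝ)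

theorem stmt_5 (n : ℕ) (hn : 2 ≤ n) :
    ∑ r ∈ Finset.Icc 2 n,
        ((n : ℝ) / ((n : ℝ) - 1)) ^ n * ((r : ℝ) / n) *
          ((n.descFactorial r : ℝ) / (n : ℝ) ^ r) * (derNum r / (r.factorial : ℝ))
    = 1 := by
  have hn0 : (n : ℝ) ≠ 0 := by positivity
  have hn1 : (n : ℝ) - 1 ≠ 0 := by
    have : (2 : ℝ) ≤ n := by exact_mod_cast hn
    intro h; nlinarith
  set b : ℕ → ℝ := fun r => ∑ j ∈ Finset.range (r + 1), (-1 : ℝ) ^ j / (j.factorial : ℝ)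
    with hb
  set a : ℕ → ℝ := fun r => (n.descFactorial r : ℝ) / (n : ℝ) ^ r with ha
  set h : ℕ → ℝ := fun s => a s * ((-1 : ℝ) ^ s / (s.factorial : ℝ)) with hh
  -- rewrite each summand
  have hterm : ∀ r ∈ Finset.Icc 2 n,
      ((n : ℝ) / ((n : ℝ) - 1)) ^ n * ((r : ℝ) / n) *
          ((n.descFactorial r : ℝ) / (n : ℝ) ^ r) * (derNum r / (r.factorial : ℝ))
      = ((n : ℝ) / ((n : ℝ) - 1)) ^ n * ((a r * b r - a (r + 1) * b (r + 1)) + h (r + 1)) := by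
    intro r hr
    rw [Finset.mem_Icc] at hr
    obtain ⟨hr2, hrn⟩ := hr
    have hrfac : (r.factorial : ℝ) ≠ 0 := by positivity
    have hder : derNum r / (r.factorial : ℝ) = b r := by
      rw [derNum, hb]
      field_simp
    rw [hder]
    -- a r - a (r+1) = (r/n) * a r
    have hdesc : (n.descFactorial (r + 1) : ℝ) = ((n : ℝ) - r) * n.descFactorial r := by
      rw [Nat.descFactorial_succ]
      push_cast [Nat.cast_sub hrn]
      ring
    have hstep : a r - a (r + 1) = (r : ℝ) / n * a r := by
      rw [ha]
      simp only [hdesc, pow_succ]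
      field_simp
      ring
    have hbstep : b (r + 1) = b r + (-1 : ℝ) ^ (r + 1) / ((r + 1).factorial : ℝ) := by
      rw [hb]; exact Finset.sum_range_succ _ _
    have : (a r * b r - a (r + 1) * b (r + 1)) + h (r + 1)
        = (a r - a (r + 1)) * b r := by
      rw [hbstep, hh]; ring
    rw [this, hstep, ha]
    ring
  rw [Finset.sum_congr rfl hterm, ← Finset.mul_sum]
  -- telescope
  have hIcc : Finset.Icc 2 n = Finset.Ico 2 (n + 1) := by
    rw [Finset.Ico_add_one_right_eq_Icc]
  rw [hIcc, Finset.sum_Ico_eq_sum_range]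
  have hne : n + 1 - 2 = n - 1 := by omega
  rw [hne, Finset.sum_add_distrib]
  have htel : ∑ i ∈ Finset.range (n - 1),
      (a (2 + i) * b (2 + i) - a (2 + i + 1) * b (2 + i + 1))
      = a 2 * b 2 - a (2 + (n - 1)) * b (2 + (n - 1)) :=
    Finset.sum_range_sub' (fun i => a (2 + i) * b (2 + i)) (n - 1)
  have h2n : 2 + (n - 1) = n + 1 := by omega
  have han1 : a (n + 1) = 0 := by
    rw [ha]
    simp [Nat.descFactorial_eq_zero_iff_lt.2 (Nat.lt_succ_self n)]
  rw [htel, h2n, han1]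
  -- the h-sum
  have hhs : ∀ i, a (2 + i + 1) * b (2 + i + 1) = a (2 + i + 1) * b (2 + i + 1) := fun _ => rfl
  have hshift : ∑ i ∈ Finset.range (n - 1), h (2 + i + 1)
      = ∑ i ∈ Finset.range (n + 2), h i - (h 0 + h 1 + h 2) := by
    have h3 : n + 2 = 3 + (n - 1) := by omega
    rw [h3, Finset.sum_range_add]
    have : ∑ i ∈ Finset.range 3, h i = h 0 + h 1 + h 2 := by
      simp [Finset.sum_range_succ]
    rw [this]
    have : ∑ i ∈ Finset.range (n - 1), h (3 + i)
        = ∑ i ∈ Finset.range (n - 1), h (2 + i + 1) :=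
      Finset.sum_congr rfl fun i _ => by rw [show (3 : ℕ) + i = 2 + i + 1 by omega]
    rw [this]
    ring
  rw [hshift]
  -- compute h 0, h 1, g 2 = h 2
  have hh0 : h 0 = 1 := by simp [hh, ha]
  have hh1 : h 1 = -1 := by
    simp [hh, ha, hn0]
  have hg2 : a 2 * b 2 = h 2 := by
    rw [hh, hb]
    norm_num [Finset.sum_range_succ]
  -- binomial sum
  have hbinom : ∑ i ∈ Finset.range (n + 2), h i = (((n : ℝ) - 1) / n) ^ n := by
    have hstep : ∀ i, h i = (n.choose i : ℝ) * (-1 / (n : ℝ)) ^ i := by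
      intro i
      simp only [hh, ha]
      rw [Nat.descFactorial_eq_factorial_mul_choose]
      have hif : (i.factorial : ℝ) ≠ 0 := by positivity
      push_cast
      rw [div_pow, neg_pow]
      field_simp
    simp only [hstep]
    rw [Finset.sum_range_succ, Nat.choose_succ_self]
    simp only [Nat.cast_zero, zero_mul, add_zero]
    have := add_pow (-1 / (n : ℝ)) 1 n
    simp only [one_pow, mul_one] at this
    rw [show ∑ i ∈ Finset.range (n + 1), (n.choose i : ℝ) * (-1 / (n : ℝ)) ^ i
        = ∑ i ∈ Finset.range (n + 1), (-1 / (n : ℝ)) ^ i * (n.choose i : ℝ) by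
          exact Finset.sum_congr rfl fun i _ => mul_comm _ _, ← this]
    congr 1
    field_simp
    ring
  rw [hg2, hh0, hh1, hbinom]
  have hx : h 2 - 0 * b (n + 1) + ((((n : ℝ) - 1) / n) ^ n - (1 + -1 + h 2))
      = (((n : ℝ) - 1) / n) ^ n := by ring
  rw [hx, ← mul_pow]
  have hone : (n : ℝ) / ((n : ℝ) - 1) * (((n : ℝ) - 1) / n) = 1 := by field_simp
  rw [hone, one_pow]
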